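/- For every natural number n and every real number z, the polynomial \mathcal{T}_n is related to the upper incomplete Gamma function by \mathcal{T}_n(z) = e^{z+n} \, \Gamma(n+1, z+n), i.e. \mathcal{T}_n(z) = e^{z+n} \int_{z+n}^{\infty} t^{n} e^{-t} \, dt. -/

import Mathlib

open Finset Real

/-- The real polynomial `𝒯 n z = ∑_{m=0}^{n} C(n,m) m^m (n-m+z)^(n-m)` (with `0^0 = 1`). -/
noncomputable def calT (n : ℕ) (z : ℝ) : ℝ :=
  ∑ m ∈ Finset.range (n + 1),
    (n.choose m : ℝ) * (m : ℝ) ^ m * (((n - m : ℕ) : ℝ) + z) ^ (n - m)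

open Nat

/-- Iterated forward differences of monomials. -/
lemma fd_aux : ∀ n : ℕ, (∀ j, j < n → ∀ y : ℝ, (fwdDiff (1:ℝ))^[n] (fun x => x ^ j) y = 0)
    ∧ (∀ y : ℝ, (fwdDiff (1:ℝ))^[n] (fun x => x ^ n) y = n !) := by
  intro n
  induction n with
  | zero =>
    exact ⟨fun j hj => absurd hj (Nat.not_lt_zero j), fun y => by simp⟩
  | succ n ih =>
    have key : ∀ j : ℕ, fwdDiff (1:ℝ) (fun x => x ^ j)
        = ∑ i ∈ Finset.range j, (fun y : ℝ => (j.choose i : ℝ) * y ^ i) := by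
      intro j; funext y
      have hb := add_pow y (1:ℝ) j
      rw [Finset.sum_range_succ] at hb
      simp only [fwdDiff, Finset.sum_apply]
      rw [hb]
      simp [mul_comm]
    have smul_iter : ∀ (c : ℝ) (f : ℝ → ℝ) (k : ℕ) (y : ℝ),
        (fwdDiff (1:ℝ))^[k] (fun x => c * f x) y = c * (fwdDiff (1:ℝ))^[k] f y := by
      intro c f k y
      have h1 : (fun x => c * f x) = c • f := by funext x; simp
      rw [h1, fwdDiff_iter_const_smul]
      simp
    have main : ∀ j : ℕ, ∀ y : ℝ, (fwdDiff (1:ℝ))^[n+1] (fun x => x ^ j) y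
        = ∑ i ∈ Finset.range j, (j.choose i : ℝ) * (fwdDiff (1:ℝ))^[n] (fun x => x ^ i) y := by
      intro j y
      rw [Function.iterate_succ_apply, key j, fwdDiff_iter_finset_sum]
      simp only [Finset.sum_apply]
      exact Finset.sum_congr rfl fun i _ => smul_iter _ _ _ _
    constructor
    · intro j hj y
      rw [main j y]
      refine Finset.sum_eq_zero fun i hi => ?_
      rw [ih.1 i (lt_of_lt_of_le (Finset.mem_range.mp hi) (Nat.lt_succ_iff.mp hj)) y]
      ring
    · intro y
      rw [main (n+1) y, Finset.sum_range_succ]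
      have h0 : ∑ i ∈ Finset.range n, ((n+1).choose i : ℝ) * (fwdDiff (1:ℝ))^[n] (fun x => x ^ i) y
          = 0 := by
        refine Finset.sum_eq_zero fun i hi => ?_
        rw [ih.1 i (Finset.mem_range.mp hi) y]; ring
      rw [h0, ih.2 y, zero_add, Nat.choose_succ_self_right]
      push_cast [Nat.factorial_succ]
      ring

/-- The alternating-sum value of `calT` at `z = -n`. -/
lemma calT_neg_n (n : ℕ) : calT n (-(n : ℝ)) = n ! := by
  have h := fwdDiff_iter_eq_sum_shift (1:ℝ) (fun x : ℝ => x ^ n) n 0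
  rw [(fd_aux n).2 0] at h
  unfold calT
  rw [h]
  refine Finset.sum_congr rfl fun m hm => ?_
  have hm' : m ≤ n := Nat.lt_succ_iff.mp (Finset.mem_range.mp hm)
  have hbase : ((n - m : ℕ) : ℝ) + -(n : ℝ) = -(m : ℝ) := by
    rw [Nat.cast_sub hm']; ring
  have hpow : (m : ℝ) ^ m * (m : ℝ) ^ (n - m) = (m : ℝ) ^ n := by
    rw [← pow_add, Nat.add_sub_cancel' hm']
  rw [hbase, neg_pow]
  simp only [zsmul_eq_mul, Int.cast_mul, Int.cast_pow, Int.cast_neg, Int.cast_one,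
    Int.cast_natCast, zero_add, nsmul_eq_mul, mul_one]
  linear_combination ((-1:ℝ)^(n-m) * (n.choose m : ℝ)) * hpow

/-- Derivative of `calT (n+1)`. -/
lemma calT_hasDerivAt (n : ℕ) (z : ℝ) :
    HasDerivAt (fun z => calT (n+1) z) ((n+1 : ℝ) * calT n (z+1)) z := by
  have hterm : ∀ m ∈ Finset.range (n+2),
      HasDerivAt (fun z => ((n+1).choose m : ℝ) * (m : ℝ) ^ m * (((n+1 - m : ℕ) : ℝ) + z) ^ (n+1-m))
        (((n+1).choose m : ℝ) * (m : ℝ) ^ m *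
          (((n+1-m : ℕ) : ℝ) * (((n+1 - m : ℕ) : ℝ) + z) ^ (n+1-m-1) * 1)) z := by
    intro m _
    exact (((hasDerivAt_id z).const_add (((n+1 - m : ℕ) : ℝ))).pow (n+1-m)).const_mul _
  have hsum := HasDerivAt.fun_sum hterm
  have heq : ∑ m ∈ Finset.range (n+2), ((n+1).choose m : ℝ) * (m : ℝ) ^ m *
          (((n+1-m : ℕ) : ℝ) * (((n+1 - m : ℕ) : ℝ) + z) ^ (n+1-m-1) * 1)
      = (n+1 : ℝ) * calT n (z+1) := by
    rw [Finset.sum_range_succ]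
    simp only [Nat.sub_self, Nat.cast_zero, zero_mul, mul_zero, mul_one, add_zero]
    unfold calT
    rw [Finset.mul_sum]
    refine Finset.sum_congr rfl fun m hm => ?_
    have hm' : m ≤ n := Nat.lt_succ_iff.mp (Finset.mem_range.mp hm)
    have h1 : n + 1 - m = (n - m) + 1 := by omega
    have h2 : n + 1 - m - 1 = n - m := by omega
    have hcoef : ((n+1).choose m : ℝ) * ((n+1-m : ℕ) : ℝ) = (n+1 : ℝ) * (n.choose m : ℝ) := by
      have hh := congrArg (Nat.cast (R := ℝ)) (Nat.choose_mul_succ_eq n m)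
      push_cast at hh
      linarith
    have hbase : ((n+1 - m : ℕ) : ℝ) + z = ((n - m : ℕ) : ℝ) + (z + 1) := by
      rw [h1]; push_cast; ring
    rw [h2, hbase]
    linear_combination ((m:ℝ)^m * (((n - m : ℕ) : ℝ) + (z+1))^(n-m)) * hcoef
  rw [heq] at hsum
  exact hsum

/-- The truncated exponential sum. -/
noncomputable def gP (n : ℕ) (z : ℝ) : ℝ :=
  ∑ k ∈ Finset.range (n+1), (n ! : ℝ) / (k ! : ℝ) * (z + n) ^ k

lemma gP_hasDerivAt (n : ℕ) (z : ℝ) :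
    HasDerivAt (fun z => gP (n+1) z) ((n+1 : ℝ) * gP n (z+1)) z := by
  have hterm : ∀ k ∈ Finset.range (n+2),
      HasDerivAt (fun z : ℝ => ((n+1)! : ℝ) / (k ! : ℝ) * (z + ((n+1 : ℕ) : ℝ)) ^ k)
        (((n+1)! : ℝ) / (k ! : ℝ) * ((k : ℝ) * (z + ((n+1 : ℕ) : ℝ)) ^ (k-1) * 1)) z := by
    intro k _
    exact (((hasDerivAt_id z).add_const _).pow k).const_mul _
  have hsum := HasDerivAt.fun_sum hterm
  have heq : ∑ k ∈ Finset.range (n+2), ((n+1)! : ℝ) / (k ! : ℝ) *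
        ((k : ℝ) * (z + ((n+1 : ℕ) : ℝ)) ^ (k-1) * 1)
      = (n+1 : ℝ) * gP n (z+1) := by
    rw [Finset.sum_range_succ']
    simp only [Nat.cast_zero, zero_mul, mul_zero, add_zero, Nat.add_sub_cancel]
    unfold gP
    rw [Finset.mul_sum]
    refine Finset.sum_congr rfl fun k _ => ?_
    have hk : ((k ! : ℕ) : ℝ) ≠ 0 := Nat.cast_ne_zero.mpr (Nat.factorial_ne_zero k)
    have hk2 : (k : ℝ) + 1 ≠ 0 := by positivity
    have hbase : z + ((n+1 : ℕ) : ℝ) = (z + 1) + (n : ℝ) := by push_cast; ring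
    rw [hbase, show ((n+1)! : ℕ) = (n+1) * n ! from Nat.factorial_succ n,
      show ((k+1)! : ℕ) = (k+1) * k ! from Nat.factorial_succ k]
    push_cast
    field_simp
  rw [heq] at hsum
  have hfun : (fun z : ℝ => ∑ k ∈ Finset.range (n+2), ((n+1)! : ℝ) / (k ! : ℝ) *
        (z + ((n+1 : ℕ) : ℝ)) ^ k) = fun z => gP (n+1) z := by
    funext w
    unfold gP
    rfl
  rwa [hfun] at hsum

lemma gP_neg (n : ℕ) : gP n (-(n : ℝ)) = n ! := by
  unfold gP
  rw [Finset.sum_eq_single_of_mem 0 (Finset.mem_range.mpr (Nat.succ_pos n))]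
  · simp
  · intro k _ hk
    rw [neg_add_cancel, zero_pow hk, mul_zero]

/-- The key polynomial identity. -/
lemma calT_eq_gP (n : ℕ) : ∀ z : ℝ, calT n z = gP n z := by
  induction n with
  | zero =>
    intro z
    unfold calT gP
    simp
  | succ n ih =>
    have hF : ∀ z : ℝ, HasDerivAt (fun z => calT (n+1) z - gP (n+1) z) 0 z := by
      intro z
      have h := (calT_hasDerivAt n z).sub (gP_hasDerivAt n z)
      rwa [ih (z+1), sub_self] at h
    have hdiff : Differentiable ℝ (fun z => calT (n+1) z - gP (n+1) z) :=
      fun z => (hF z).differentiableAt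
    have hderiv : ∀ z : ℝ, deriv (fun z => calT (n+1) z - gP (n+1) z) z = 0 :=
      fun z => (hF z).deriv
    intro z
    have hconst := is_const_of_deriv_eq_zero hdiff hderiv z (-(((n+1) : ℕ) : ℝ))
    have hval : calT (n+1) (-(((n+1) : ℕ) : ℝ)) - gP (n+1) (-(((n+1) : ℕ) : ℝ)) = 0 := by
      rw [calT_neg_n (n+1), gP_neg (n+1), sub_self]
    have hz : calT (n+1) z - gP (n+1) z = 0 := by rw [hconst, hval]
    linarith

lemma integrableOn_pow_mul_exp_neg (n : ℕ) (a : ℝ) :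
    MeasureTheory.IntegrableOn (fun t : ℝ => t ^ n * Real.exp (-t)) (Set.Ioi a) := by
  have h0 : MeasureTheory.IntegrableOn (fun t : ℝ => t ^ n * Real.exp (-t)) (Set.Ioi (0:ℝ)) := by
    have hg := Real.GammaIntegral_convergent (s := (n+1 : ℝ)) (by positivity)
    refine hg.congr_fun ?_ measurableSet_Ioi
    intro t _
    show Real.exp (-t) * t ^ ((n:ℝ) + 1 - 1) = t ^ n * Real.exp (-t)
    rw [show ((n:ℝ) + 1 - 1) = ((n : ℕ) : ℝ) by ring, Real.rpow_natCast, mul_comm]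
  rcases le_or_gt 0 a with ha | ha
  · exact h0.mono_set (Set.Ioi_subset_Ioi ha)
  · rw [← Set.Ioc_union_Ioi_eq_Ioi ha.le, MeasureTheory.integrableOn_union]
    exact ⟨(Continuous.mul (continuous_pow n)
      (Real.continuous_exp.comp continuous_neg)).integrableOn_Ioc, h0⟩

lemma incGamma_eq (n : ℕ) (x : ℝ) :
    ∫ t in Set.Ioi x, t ^ n * Real.exp (-t)
      = Real.exp (-x) * ∑ k ∈ Finset.range (n+1), (n ! : ℝ) / (k ! : ℝ) * x ^ k := by
  set c : ℕ → ℝ := fun k => (n ! : ℝ) / (k ! : ℝ) with hc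
  set F : ℝ → ℝ := fun t => -(Real.exp (-t) * ∑ k ∈ Finset.range (n+1), c k * t ^ k) with hF
  have hderiv : ∀ t : ℝ, HasDerivAt F (t ^ n * Real.exp (-t)) t := by
    intro t
    have hexp : HasDerivAt (fun t : ℝ => Real.exp (-t)) (-Real.exp (-t)) t := by
      simpa using (hasDerivAt_neg t).exp
    have hP : HasDerivAt (fun t : ℝ => ∑ k ∈ Finset.range (n+1), c k * t ^ k)
        (∑ k ∈ Finset.range (n+1), c k * ((k : ℝ) * t ^ (k-1))) t :=
      HasDerivAt.fun_sum fun k _ => (hasDerivAt_pow k t).const_mul (c k)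
    have hmul := (hexp.mul hP).neg
    have hP' : ∑ k ∈ Finset.range (n+1), c k * ((k : ℝ) * t ^ (k-1))
        = ∑ k ∈ Finset.range n, c k * t ^ k := by
      rw [Finset.sum_range_succ']
      simp only [Nat.cast_zero, zero_mul, mul_zero, add_zero, Nat.add_sub_cancel]
      refine Finset.sum_congr rfl fun k _ => ?_
      have hk : ((k ! : ℕ) : ℝ) ≠ 0 := Nat.cast_ne_zero.mpr (Nat.factorial_ne_zero k)
      have hk1 : (((k+1)! : ℕ) : ℝ) ≠ 0 := Nat.cast_ne_zero.mpr (Nat.factorial_ne_zero (k+1))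
      rw [hc]
      simp only
      rw [Nat.factorial_succ]
      push_cast
      field_simp
    have hfinal : -((-Real.exp (-t)) * (∑ k ∈ Finset.range (n+1), c k * t ^ k)
          + Real.exp (-t) * (∑ k ∈ Finset.range (n+1), c k * ((k : ℝ) * t ^ (k-1))))
        = t ^ n * Real.exp (-t) := by
      rw [hP', Finset.sum_range_succ]
      have hcn : c n = 1 := by
        rw [hc]
        simp only
        rw [div_self (Nat.cast_ne_zero.mpr (Nat.factorial_ne_zero n))]
      rw [hcn]
      ring
    rw [← hfinal]
    exact hmul
  have htend : Filter.Tendsto F Filter.atTop (nhds 0) := by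
    have h1 : Filter.Tendsto (fun t : ℝ => ∑ k ∈ Finset.range (n+1), c k * (t ^ k * Real.exp (-t)))
        Filter.atTop (nhds (∑ k ∈ Finset.range (n+1), c k * 0)) :=
      tendsto_finset_sum _ fun k _ => (tendsto_pow_mul_exp_neg_atTop_nhds_zero k).const_mul (c k)
    simp only [mul_zero, Finset.sum_const_zero] at h1
    have h2 : F = fun t => -(∑ k ∈ Finset.range (n+1), c k * (t ^ k * Real.exp (-t))) := by
      funext t
      rw [hF]
      simp only
      rw [Finset.mul_sum]
      congr 1
      exact Finset.sum_congr rfl fun k _ => by ring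
    rw [h2]
    simpa using h1.neg
  have hint := MeasureTheory.integral_Ioi_of_hasDerivAt_of_tendsto' (a := x)
    (fun t _ => hderiv t) (integrableOn_pow_mul_exp_neg n x) htend
  rw [hint, hF]
  simp only [zero_sub, neg_neg, hc]

theorem calT_eq_incomplete_gamma (n : ℕ) (z : ℝ) :
    calT n z = Real.exp (z + n) * ∫ t in Set.Ioi (z + n), t ^ n * Real.exp (-t) := by
  rw [incGamma_eq n (z + n), ← mul_assoc, ← Real.exp_add]
  rw [show z + (n:ℝ) + -(z + (n:ℝ)) = 0 by ring, Real.exp_zero, one_mul]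
  exact calT_eq_gP n z
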